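/- arXiv:2210.12920 — 2 statements merged into one kernel-verified Lean document; each statement's English description precedes it below -/
import Mathlib

section
/- If the per-user power splitting ratios satisfy α_k ≥ (2^R − 1)/S · 2^{R(K−k)} for each k ∈ [K] (with S > 0 the SNR and R > 0 the target rate), then summing these lower bounds yields Σ_{k=1}^K α_k ≥ (2^{RK} − 1)/S; consequently a power allocation with Σ α_k = 1 satisfying all these constraints exists if and only if K ≤ log₂(S+1)/R. -/
open Finset

lemma sum_pow_aux (q : ℝ) (hq : q ≠ 1) (a K : ℕ) :
    ∑ j ∈ Finset.Ico a K, q ^ (K - 1 - j) = (q ^ (K - a) - 1) / (q - 1) := by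
  rw [Finset.sum_Ico_eq_sum_range]
  have : ∀ i, K - 1 - (a + i) = (K - a) - 1 - i := by omega
  simp_rw [this]
  rw [Finset.sum_range_reflect (fun i => q ^ i)]
  exact geom_sum_eq hq _

lemma fin_filter_sum (K : ℕ) (α : Fin K → ℝ) (k : Fin K) :
    ∑ i ∈ univ.filter (fun i => k < i), α i
      = ∑ j ∈ Finset.Ico ((k : ℕ) + 1) K, if h : j < K then α ⟨j, h⟩ else 0 := by
  rw [Finset.sum_filter]
  have h1 : ∀ i : Fin K, (if k < i then α i else 0)
      = (fun j => if (k : ℕ) < j then (if h : j < K then α ⟨j, h⟩ else 0) else 0) (i : ℕ) := by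
    intro i
    have h2 : (if h : (i : ℕ) < K then α ⟨(i : ℕ), h⟩ else 0) = α i := by
      rw [dif_pos i.isLt]
    simp only [h2, Fin.lt_def]
  simp_rw [h1]
  rw [Fin.sum_univ_eq_sum_range
    (fun j => if (k : ℕ) < j then (if h : j < K then α ⟨j, h⟩ else 0) else 0) K]
  rw [← Finset.sum_filter]
  congr 1
  ext j
  simp only [Finset.mem_filter, Finset.mem_range, Finset.mem_Ico]
  omega

lemma forward_aux (S q : ℝ) (hS : 0 < S) (hq : 1 < q) (K : ℕ)
    (g : ℕ → ℝ)
    (hcon : ∀ m, m < K → (q - 1) * ((∑ j ∈ Finset.Ico (m + 1) K, g j) + 1 / S) ≤ g m)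
    (hsum : ∑ j ∈ Finset.Ico 0 K, g j = 1) :
    q ^ K ≤ S + 1 := by
  have hq0 : 0 < q := by linarith
  have claim : ∀ i, i ≤ K → q ^ i / S ≤ (∑ j ∈ Finset.Ico (K - i) K, g j) + 1 / S := by
    intro i
    induction i with
    | zero =>
      intro _
      simp only [Nat.sub_zero, Finset.Ico_self, Finset.sum_empty, pow_zero, zero_add]
      exact le_refl _
    | succ i ih =>
      intro hi
      have h1 := ih (by omega)
      have hm : K - (i + 1) < K := by omega
      have h2 := hcon (K - (i + 1)) hm
      have hsplit : ∑ j ∈ Finset.Ico (K - (i + 1)) K, g j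
          = g (K - (i + 1)) + ∑ j ∈ Finset.Ico (K - (i + 1) + 1) K, g j :=
        Finset.sum_eq_sum_Ico_succ_bot hm g
      have he : K - (i + 1) + 1 = K - i := by omega
      rw [he] at hsplit
      rw [he] at h2
      have h3 : q * (q ^ i / S) ≤ q * ((∑ j ∈ Finset.Ico (K - i) K, g j) + 1 / S) :=
        mul_le_mul_of_nonneg_left h1 (le_of_lt hq0)
      have h4 : q ^ (i + 1) = q ^ i * q := pow_succ q i
      rw [hsplit]
      have : q ^ (i + 1) / S = q * (q ^ i / S) := by rw [h4]; ring
      rw [this]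
      nlinarith [h2, h3]
  have hmain := claim K le_rfl
  simp only [Nat.sub_self] at hmain
  rw [hsum] at hmain
  rw [div_le_iff₀ hS] at hmain
  have hh : (1 + 1 / S) * S = S + 1 := by field_simp
  rw [hh] at hmain
  exact hmain

/-- lower bounds on the power-splitting ratios sum to `(2^(R*K) - 1)/S`,
and a feasible power allocation exists iff `K ≤ log₂(S+1)/R`. -/
theorem power_allocation_feasibility (S R : ℝ) (hS : 0 < S) (hR : 0 < R)
    (K : ℕ) (hK : 1 ≤ K) :
    (∀ α : Fin K → ℝ,
      (∀ k : Fin K, α k ≥ (2 ^ R - 1) / S * 2 ^ (R * ((K : ℝ) - 1 - (k : ℕ)))) →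
      ∑ k, α k ≥ (2 ^ (R * K) - 1) / S) ∧
    ((∃ α : Fin K → ℝ,
        (∀ k, α k ∈ Set.Icc (0 : ℝ) 1) ∧ (∑ k, α k = 1) ∧
        (∀ k : Fin K, (k : ℕ) < K - 1 →
          α k / ((∑ i ∈ univ.filter (fun i => k < i), α i) + 1 / S) ≥ 2 ^ R - 1) ∧
        α ⟨K - 1, by omega⟩ * S ≥ 2 ^ R - 1) ↔
      (K : ℝ) ≤ Real.logb 2 (S + 1) / R) := by
  set q : ℝ := 2 ^ R with hqdef
  have hq1 : 1 < q := by
    rw [hqdef]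
    exact (Real.one_lt_rpow_iff_of_pos (by norm_num)).mpr (Or.inl ⟨one_lt_two, hR⟩)
  have hq0 : 0 < q := by linarith
  have hqne : q ≠ 1 := ne_of_gt hq1
  have hq1ne : q - 1 ≠ 0 := by intro h; apply hqne; linarith
  have hSne : S ≠ 0 := ne_of_gt hS
  -- rpow-to-pow identities
  have hRK : (2 : ℝ) ^ (R * (K : ℝ)) = q ^ K := by
    rw [Real.rpow_mul (by norm_num), Real.rpow_natCast]
  have hRk : ∀ k : Fin K, (2 : ℝ) ^ (R * ((K : ℝ) - 1 - (k : ℕ))) = q ^ (K - 1 - (k : ℕ)) := by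
    intro k
    have hk := k.isLt
    have hcast : (K : ℝ) - 1 - (k : ℕ) = ((K - 1 - (k : ℕ) : ℕ) : ℝ) := by
      rw [Nat.cast_sub (by omega), Nat.cast_sub (by omega)]
      push_cast; ring
    rw [hcast, Real.rpow_mul (by norm_num), Real.rpow_natCast]
  -- the geometric sum of the lower bounds
  have hgeo : ∑ k : Fin K, (q - 1) / S * q ^ (K - 1 - (k : ℕ)) = (q ^ K - 1) / S := by
    rw [← Finset.mul_sum]
    rw [Fin.sum_univ_eq_sum_range (fun j => q ^ (K - 1 - j)) K]
    rw [Finset.range_eq_Ico, sum_pow_aux q hqne 0 K]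
    simp only [Nat.sub_zero]
    field_simp
  constructor
  · -- Part 1
    intro α hα
    have h1 : ∑ k, α k ≥ ∑ k : Fin K, (q - 1) / S * q ^ (K - 1 - (k : ℕ)) := by
      apply Finset.sum_le_sum
      intro k _
      have := hα k
      rwa [hRk k] at this
    rw [hgeo] at h1
    rwa [hRK]
  · -- Part 2
    have hiff : ((K : ℝ) ≤ Real.logb 2 (S + 1) / R) ↔ q ^ K ≤ S + 1 := by
      rw [le_div_iff₀ hR, ← hRK, mul_comm (K : ℝ) R]
      exact Real.le_logb_iff_rpow_le (by norm_num) (by linarith)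
    rw [hiff]
    constructor
    · -- feasibility implies q^K ≤ S+1
      rintro ⟨α, hIcc, hsum, hsinr, hlast⟩
      set g : ℕ → ℝ := fun j => if h : j < K then α ⟨j, h⟩ else 0 with hgdef
      have hg0 : ∀ j, 0 ≤ g j := by
        intro j
        simp only [hgdef]
        by_cases h : j < K
        · rw [dif_pos h]; exact (hIcc _).1
        · rw [dif_neg h]
      have hTnn : ∀ m : ℕ, 0 ≤ ∑ j ∈ Finset.Ico (m + 1) K, g j :=
        fun m => Finset.sum_nonneg fun j _ => hg0 j
      apply forward_aux S q hS hq1 K g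
      · intro m hm
        have hgm : g m = α ⟨m, hm⟩ := by simp only [hgdef]; rw [dif_pos hm]
        have hd : 0 < (∑ j ∈ Finset.Ico (m + 1) K, g j) + 1 / S := by
          have := hTnn m
          have : (0 : ℝ) < 1 / S := by positivity
          linarith [hTnn m]
        by_cases hm' : m < K - 1
        · have h := hsinr ⟨m, hm⟩ hm'
          rw [fin_filter_sum K α ⟨m, hm⟩] at h
          rw [ge_iff_le, le_div_iff₀ hd] at h
          rw [hgm]
          exact h
        · -- m = K - 1
          have hmeq : m = K - 1 := by omega
          have hempty : Finset.Ico (m + 1) K = ∅ := by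
            rw [Finset.Ico_eq_empty_iff]; omega
          rw [hempty, Finset.sum_empty, zero_add, hgm]
          have h := hlast
          have hcast : (⟨K - 1, by omega⟩ : Fin K) = ⟨m, hm⟩ := by
            simp [hmeq]
          rw [hcast] at h
          rw [ge_iff_le] at h
          rw [mul_one_div, div_le_iff₀ hS]
          exact h
      · -- sum of g over Ico 0 K is 1
        rw [← Finset.range_eq_Ico, ← Fin.sum_univ_eq_sum_range g K]
        rw [← hsum]
        apply Finset.sum_congr rfl
        intro i _
        simp only [hgdef]
        rw [dif_pos i.isLt]
    · -- construction
      intro hle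
      set c : ℝ := (q - 1) / S with hcdef
      set Δ : ℝ := 1 - (q ^ K - 1) / S with hΔdef
      have hc0 : 0 < c := by rw [hcdef]; exact div_pos (by linarith) hS
      have hΔ0 : 0 ≤ Δ := by
        rw [hΔdef, sub_nonneg, div_le_one hS]
        linarith
      set f : ℕ → ℝ := fun j => if j = 0 then c * q ^ (K - 1) + Δ else c * q ^ (K - 1 - j)
        with hfdef
      have hf0 : ∀ j, 0 ≤ f j := by
        intro j
        simp only [hfdef]
        by_cases h : j = 0
        · rw [if_pos h]; positivity
        · rw [if_neg h]; positivity
      -- tail sums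
      have htail : ∀ m : ℕ, 1 ≤ m → m ≤ K →
          ∑ j ∈ Finset.Ico m K, f j = (q ^ (K - m) - 1) / S := by
        intro m hm1 hmK
        have : ∑ j ∈ Finset.Ico m K, f j = ∑ j ∈ Finset.Ico m K, c * q ^ (K - 1 - j) := by
          apply Finset.sum_congr rfl
          intro j hj
          rw [Finset.mem_Ico] at hj
          simp only [hfdef]
          rw [if_neg (by omega : ¬ j = 0)]
        rw [this, ← Finset.mul_sum, sum_pow_aux q hqne m K, hcdef]
        field_simp
      have hsum1 : ∑ j ∈ Finset.Ico 0 K, f j = 1 := by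
        rw [Finset.sum_eq_sum_Ico_succ_bot (by omega : 0 < K) f]
        rw [htail 1 le_rfl (by omega)]
        have hf00 : f 0 = c * q ^ (K - 1) + Δ := by simp [hfdef]
        rw [hf00, hcdef, hΔdef]
        have hqK : q ^ K = q ^ (K - 1) * q := by
          rw [← pow_succ]; congr 1; omega
        rw [hqK]
        field_simp
        ring
      have hsumfin : ∑ k : Fin K, f (k : ℕ) = 1 := by
        rw [Fin.sum_univ_eq_sum_range f K, Finset.range_eq_Ico]
        exact hsum1
      refine ⟨fun k => f (k : ℕ), ?_, hsumfin, ?_, ?_⟩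
      · intro k
        constructor
        · exact hf0 _
        · calc f (k : ℕ) ≤ ∑ k' : Fin K, f (k' : ℕ) :=
                Finset.single_le_sum (fun i _ => hf0 _) (Finset.mem_univ k)
            _ = 1 := hsumfin
      · -- SINR constraints for k < K - 1
        intro k hk
        have hkK := k.isLt
        rw [fin_filter_sum K (fun k => f (k : ℕ)) k]
        have hdite : ∑ j ∈ Finset.Ico ((k : ℕ) + 1) K,
            (if h : j < K then f ((⟨j, h⟩ : Fin K) : ℕ) else 0)
            = ∑ j ∈ Finset.Ico ((k : ℕ) + 1) K, f j := by
          apply Finset.sum_congr rfl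
          intro j hj
          rw [Finset.mem_Ico] at hj
          rw [dif_pos hj.2]
        rw [hdite, htail ((k : ℕ) + 1) (by omega) (by omega)]
        have hKk : K - ((k : ℕ) + 1) = K - 1 - (k : ℕ) := by omega
        rw [hKk]
        set M : ℕ := K - 1 - (k : ℕ) with hMdef
        have hD : (q ^ M - 1) / S + 1 / S = q ^ M / S := by field_simp; ring
        rw [hD]
        have hDpos : 0 < q ^ M / S := by positivity
        rw [ge_iff_le, le_div_iff₀ hDpos]
        have hkey : (q - 1) * (q ^ M / S) = c * q ^ M := by rw [hcdef]; ring
        rw [hkey]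
        dsimp only
        simp only [hfdef]
        by_cases h0 : (k : ℕ) = 0
        · rw [if_pos h0]
          have : M = K - 1 := by omega
          rw [this]
          linarith
        · rw [if_neg h0]
      · -- last constraint
        show f ((⟨K - 1, by omega⟩ : Fin K) : ℕ) * S ≥ q - 1
        have hidx : ((⟨K - 1, by omega⟩ : Fin K) : ℕ) = K - 1 := rfl
        rw [hidx]
        have hcS : c * S = q - 1 := by rw [hcdef]; field_simp
        simp only [hfdef]
        by_cases h0 : K - 1 = 0
        · rw [if_pos h0, h0]
          have : (c * q ^ 0 + Δ) * S = c * S + Δ * S := by ring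
          rw [pow_zero] at this ⊢
          nlinarith [hΔ0, hS]
        · rw [if_neg h0]
          have : K - 1 - (K - 1) = 0 := by omega
          rw [this, pow_zero, mul_one]
          linarith [hcS]
end

section
/- Let X_1,…,X_K be independent exponential random variables with rates λ_1,…,λ_K > 0 and let γ > 0. Define A_1 = 1, B_1 = λ_1, and for k ∈ [2, K−1], A_k = λ_k A_{k−1}/(γ B_{k−1} + λ_k), B_k = (1+γ)B_{k−1} + λ_k. Then P(X_j ≥ γ(Σ_{i=j+1}^K X_i + 1) for all j ∈ [K−1] and X_K ≥ γ) = (λ_K A_{K−1}/(γ B_{K−1} + λ_K)) · e^{−γ((1+γ)B_{K−1} + λ_K)}. -/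
open MeasureTheory ProbabilityTheory Finset

/-- The sequence `B_k`: `B_1 = λ_1`, `B_{k+1} = (1+γ)B_k + λ_{k+1}` (with `B_0 = 0`). -/
noncomputable def Bseq (γ : ℝ) (l : ℕ → ℝ) : ℕ → ℝ
  | 0 => 0
  | k + 1 => (1 + γ) * Bseq γ l k + l (k + 1)

/-- The sequence `A_k`: `A_1 = 1`, `A_{k+1} = λ_{k+1} A_k / (γ B_k + λ_{k+1})`
(with `A_0 = 1`). -/
noncomputable def Aseq (γ : ℝ) (l : ℕ → ℝ) : ℕ → ℝ
  | 0 => 1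
  | k + 1 => l (k + 1) * Aseq γ l k / (γ * Bseq γ l k + l (k + 1))

section Aux

open Real Set
open scoped ENNReal NNReal

lemma integral_exp_rate {b : ℝ} (hb : 0 < b) (t : ℝ) :
    ∫ x in Ioi t, Real.exp (-(b * x)) = Real.exp (-(b * t)) / b := by
  have := integral_Ioi_of_hasDerivAt_of_tendsto'
    (f := fun x => -Real.exp (-(b * x)) / b) (f' := fun x => Real.exp (-(b * x))) (a := t)
    (m := 0) ?_ ?_ ?_
  · rw [this]; ring
  · intro x _
    have h : HasDerivAt (fun x => -Real.exp (-(b * x)) / b) (b * Real.exp (-(b*x)) / b) x := by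
      simpa [neg_div, neg_mul] using (ProbabilityTheory.hasDerivAt_neg_exp_mul_exp
        (r := b) (x := x)).div_const b
    refine h.congr_deriv ?_
    rw [mul_div_cancel_left₀ _ hb.ne']
  · simpa [neg_mul] using exp_neg_integrableOn_Ioi t hb
  · have h1 : Filter.Tendsto (fun x : ℝ => b * x) Filter.atTop Filter.atTop :=
      by exact Filter.Tendsto.const_mul_atTop hb Filter.tendsto_id
    have h2 : Filter.Tendsto (fun x : ℝ => -(b * x)) Filter.atTop Filter.atBot :=
      by exact Filter.tendsto_neg_atBot_iff.mpr h1
    have h3 : Filter.Tendsto (fun x : ℝ => Real.exp (-(b * x))) Filter.atTop (nhds 0) := by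
      simpa [Function.comp_def] using Real.tendsto_exp_atBot.comp h2
    have := (h3.neg).div_const b
    simpa using this

lemma expMeasure_eq (r : ℝ) :
    expMeasure r = volume.withDensity (exponentialPDF r) := rfl

lemma lintegral_exp_tail {r : ℝ} (hr : 0 < r) {a t : ℝ} (ha : 0 ≤ a) (ht : 0 ≤ t) :
    ∫⁻ y in Set.Ici t, ENNReal.ofReal (Real.exp (-(a * y))) ∂(expMeasure r)
      = ENNReal.ofReal (r / (r + a) * Real.exp (-((r + a) * t))) := by
  have hra : 0 < r + a := by linarith
  have hpdf : Measurable (exponentialPDF r) :=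
    (measurable_exponentialPDFReal r).ennreal_ofReal
  rw [expMeasure_eq, setLIntegral_withDensity_eq_setLIntegral_mul volume
    hpdf (by fun_prop) measurableSet_Ici]
  have hcong : ∫⁻ y in Set.Ici t,
      (exponentialPDF r * fun y => ENNReal.ofReal (Real.exp (-(a * y)))) y
      = ∫⁻ y in Set.Ici t, ENNReal.ofReal (r * Real.exp (-((r + a) * y))) := by
    apply setLIntegral_congr_fun measurableSet_Ici
    intro y hy
    have h0y : 0 ≤ y := le_trans ht hy
    simp only [Pi.mul_apply, exponentialPDF_of_nonneg h0y]
    rw [← ENNReal.ofReal_mul (by positivity)]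
    congr 1
    rw [mul_assoc, ← Real.exp_add]
    ring_nf
  rw [hcong]
  have hIoi : ∫⁻ y in Set.Ici t, ENNReal.ofReal (r * Real.exp (-((r + a) * y)))
      = ∫⁻ y in Set.Ioi t, ENNReal.ofReal (r * Real.exp (-((r + a) * y))) :=
    (setLIntegral_congr (Filter.EventuallyEq.symm Ioi_ae_eq_Ici))
  rw [hIoi]
  have hint : IntegrableOn (fun y => r * Real.exp (-((r + a) * y))) (Set.Ioi t) volume := by
    exact ((exp_neg_integrableOn_Ioi t hra).const_mul r).congr
      (Filter.Eventually.of_forall fun x => by norm_num; left; ring)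
  rw [← ofReal_integral_eq_lintegral_ofReal hint
    (Filter.Eventually.of_forall fun y => by positivity)]
  congr 1
  rw [MeasureTheory.integral_const_mul, integral_exp_rate hra t]
  field_simp

/-- The event set for `m+1` players. -/
def Eset (γ : ℝ) (m : ℕ) : Set (Fin (m + 1) → ℝ) :=
  {x | (∀ j : Fin (m + 1), (j : ℕ) + 1 ≤ m →
      x j ≥ γ * ((∑ i ∈ univ.filter (fun i => j < i), x i) + 1)) ∧ x (Fin.last m) ≥ γ}

noncomputable def gseq (γ : ℝ) : ℕ → ℝ → (ℕ → ℝ) → ℝ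
  | 0, a, _ => Real.exp (-a)
  | (K + 1), a, l => l 1 / (l 1 + a) * gseq γ K ((l 1 + a) * γ + a) (fun n => l (n + 1))

lemma gseq_nonneg {γ : ℝ} (hγ : 0 < γ) :
    ∀ (K : ℕ) (a : ℝ) (l : ℕ → ℝ), (∀ k, 0 < l k) → 0 ≤ a → 0 ≤ gseq γ K a l := by
  intro K
  induction K with
  | zero => intro a l hl ha; exact (Real.exp_pos _).le
  | succ K ih =>
    intro a l hl ha
    have h1 : 0 < l 1 := hl 1
    have := ih ((l 1 + a) * γ + a) (fun n => l (n + 1)) (fun k => hl (k + 1)) (by positivity)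
    have hdiv : 0 ≤ l 1 / (l 1 + a) := by positivity
    exact mul_nonneg hdiv this

lemma measurableSet_Eset (γ : ℝ) (m : ℕ) : MeasurableSet (Eset γ m) := by
  have : Eset γ m =
      (⋂ j : Fin (m + 1), {x : Fin (m + 1) → ℝ | (j : ℕ) + 1 ≤ m →
        γ * ((∑ i ∈ univ.filter (fun i => j < i), x i) + 1) ≤ x j}) ∩
      {x | γ ≤ x (Fin.last m)} := by
    ext x
    simp only [Eset, Set.mem_setOf_eq, Set.mem_inter_iff, Set.mem_iInter, ge_iff_le]
  rw [this]
  refine MeasurableSet.inter (MeasurableSet.iInter fun j => ?_)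
    (measurableSet_le measurable_const (measurable_pi_apply _))
  by_cases h : (j : ℕ) + 1 ≤ m
  · simp only [h, forall_const]
    exact measurableSet_le (by fun_prop) (measurable_pi_apply _)
  · simp [h]

lemma Eset_nonneg {γ : ℝ} (hγ : 0 < γ) {m : ℕ} {x : Fin (m + 1) → ℝ}
    (hx : x ∈ Eset γ m) : ∀ i, 0 ≤ x i := by
  suffices h : ∀ d (i : Fin (m + 1)), m - (i : ℕ) ≤ d → 0 ≤ x i by
    intro i; exact h m i (by omega)
  intro d
  induction d with
  | zero =>
    intro i hi
    have hiv : (i : ℕ) = m := by have := i.isLt; omega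
    have : i = Fin.last m := Fin.ext hiv
    rw [this]
    exact le_trans hγ.le hx.2
  | succ d ih =>
    intro i hi
    by_cases hm : (i : ℕ) = m
    · have : i = Fin.last m := Fin.ext hm
      rw [this]; exact le_trans hγ.le hx.2
    · have hcon := hx.1 i (by have := i.isLt; omega)
      have hsum : 0 ≤ ∑ i' ∈ univ.filter (fun i' => i < i'), x i' := by
        refine Finset.sum_nonneg fun i' hi' => ?_
        have hlt : i < i' := (Finset.mem_filter.1 hi').2
        have : (i : ℕ) < (i' : ℕ) := hlt
        exact ih i' (by omega)
      nlinarith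

lemma sum_filter_cons_zero {m : ℕ} (y : ℝ) (z : Fin (m + 1) → ℝ) :
    ∑ i ∈ univ.filter (fun i => (0 : Fin (m + 2)) < i), Fin.cons y z i = ∑ i, z i := by
  rw [Finset.sum_filter, Fin.sum_univ_succ]
  simp [Fin.succ_pos]

lemma sum_filter_cons_succ {m : ℕ} (y : ℝ) (z : Fin (m + 1) → ℝ) (j : Fin (m + 1)) :
    ∑ i ∈ univ.filter (fun i => j.succ < i), Fin.cons y z i
      = ∑ i ∈ univ.filter (fun i => j < i), z i := by
  rw [Finset.sum_filter, Finset.sum_filter, Fin.sum_univ_succ]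
  simp [Fin.succ_lt_succ_iff, Fin.not_lt_zero]

lemma cons_mem_Eset_iff {γ : ℝ} {m : ℕ} (y : ℝ) (z : Fin (m + 1) → ℝ) :
    Fin.cons y z ∈ Eset γ (m + 1) ↔
      z ∈ Eset γ m ∧ γ * ((∑ i, z i) + 1) ≤ y := by
  simp only [Eset, Set.mem_setOf_eq, ge_iff_le]
  rw [Fin.forall_fin_succ]
  have hlast : (Fin.cons y z : Fin (m + 2) → ℝ) (Fin.last (m + 1)) = z (Fin.last m) := by
    rw [← Fin.succ_last, Fin.cons_succ]
  rw [hlast]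
  constructor
  · rintro ⟨⟨h0, hs⟩, hl⟩
    refine ⟨⟨fun j hj => ?_, hl⟩, ?_⟩
    · have := hs j (by simp [Fin.val_succ]; omega)
      rwa [Fin.cons_succ, sum_filter_cons_succ] at this
    · have := h0 (by simp)
      rwa [Fin.cons_zero, sum_filter_cons_zero] at this
  · rintro ⟨⟨hs, hl⟩, h0⟩
    refine ⟨⟨fun _ => ?_, fun j hj => ?_⟩, hl⟩
    · rw [Fin.cons_zero, sum_filter_cons_zero]; exact h0
    · have hj' : (j : ℕ) + 1 ≤ m := by simp [Fin.val_succ] at hj; omega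
      rw [Fin.cons_succ, sum_filter_cons_succ]
      exact hs j hj'

lemma measurable_weight {n : ℕ} (a : ℝ) :
    Measurable (fun x : Fin n → ℝ => ENNReal.ofReal (Real.exp (-(a * ((∑ i, x i) + 1))))) := by
  fun_prop

lemma main_lemma {γ : ℝ} (hγ : 0 < γ) :
    ∀ (m : ℕ) (l : ℕ → ℝ), (∀ k, 0 < l k) → ∀ a : ℝ, 0 ≤ a →
    (∫⁻ x in Eset γ m, ENNReal.ofReal (Real.exp (-(a * ((∑ i, x i) + 1))))
      ∂(Measure.pi fun i : Fin (m + 1) => expMeasure (l ((i : ℕ) + 1))))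
    = ENNReal.ofReal (gseq γ (m + 1) a l) := by
  intro m
  induction m with
  | zero =>
    intro l hl a ha
    haveI : ∀ i : Fin 1, SigmaFinite (expMeasure (l ((i : ℕ) + 1))) := fun i => by
      haveI := isProbabilityMeasure_expMeasure (hl ((i : ℕ) + 1)); infer_instance
    have hfam : (fun i : Fin 1 => expMeasure (l ((i : ℕ) + 1)))
        = fun _ : Fin 1 => expMeasure (l 1) := by
      funext i; rw [Fin.eq_zero i]; rfl
    set f : (Fin 1 → ℝ) → ℝ≥0∞ :=
      fun x => ENNReal.ofReal (Real.exp (-(a * ((∑ i, x i) + 1)))) with hf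
    set e := MeasurableEquiv.funUnique (Fin 1) ℝ with he
    have hMP : MeasurePreserving e (Measure.pi fun i : Fin 1 => expMeasure (l ((i:ℕ)+1)))
        (expMeasure (l 1)) := by
      rw [hfam]; exact measurePreserving_funUnique (expMeasure (l 1)) (Fin 1)
    rw [← lintegral_indicator (measurableSet_Eset γ 0) f]
    have hcomp := hMP.lintegral_comp_emb e.measurableEmbedding
      (fun y => (Eset γ 0).indicator f (e.symm y))
    simp only [MeasurableEquiv.symm_apply_apply] at hcomp
    rw [hcomp]
    have hpt : ∀ y : ℝ, (Eset γ 0).indicator f (e.symm y)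
        = (Set.Ici γ).indicator (fun y => ENNReal.ofReal (Real.exp (-(a * (y + 1))))) y := by
      intro y
      have hsymm : (e.symm y : Fin 1 → ℝ) = fun _ => y := by
        funext i; rfl
      have hmem : ((fun _ => y : Fin 1 → ℝ) ∈ Eset γ 0) ↔ γ ≤ y := by
        simp [Eset]
      by_cases hy : γ ≤ y
      · rw [hsymm, Set.indicator_of_mem (hmem.2 hy), Set.indicator_of_mem (Set.mem_Ici.2 hy), hf]
        simp
      · rw [hsymm, Set.indicator_of_notMem (fun hc => hy (hmem.1 hc)),
          Set.indicator_of_notMem (by simpa using hy)]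
    rw [lintegral_congr hpt, lintegral_indicator measurableSet_Ici]
    have hsplit : ∀ y : ℝ, ENNReal.ofReal (Real.exp (-(a * (y + 1))))
        = ENNReal.ofReal (Real.exp (-a)) * ENNReal.ofReal (Real.exp (-(a * y))) := by
      intro y
      rw [← ENNReal.ofReal_mul (Real.exp_nonneg _), ← Real.exp_add]
      congr 2
      ring
    rw [setLIntegral_congr_fun measurableSet_Ici
      (fun y _ => hsplit y),
      lintegral_const_mul' _ _ ENNReal.ofReal_ne_top,
      lintegral_exp_tail (hl 1) ha hγ.le,
      ← ENNReal.ofReal_mul (Real.exp_nonneg _)]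
    congr 1
    simp only [gseq]
    rw [show -((l 1 + a) * γ + a) = -((l 1 + a) * γ) + -a by ring, Real.exp_add]
    ring
  | succ m ih =>
    intro l hl a ha
    haveI inst : ∀ i : Fin (m + 2), IsProbabilityMeasure (expMeasure (l ((i : ℕ) + 1))) :=
      fun i => isProbabilityMeasure_expMeasure (hl ((i : ℕ) + 1))
    haveI inst' : ∀ i : Fin (m + 2), SigmaFinite (expMeasure (l ((i : ℕ) + 1))) :=
      fun i => inferInstance
    haveI inst1 : IsProbabilityMeasure (expMeasure (l 1)) :=
      isProbabilityMeasure_expMeasure (hl 1)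
    have hl1 : 0 < l 1 := hl 1
    set a' := (l 1 + a) * γ + a with ha'def
    have ha' : 0 ≤ a' := by positivity
    set f : (Fin (m + 2) → ℝ) → ℝ≥0∞ :=
      fun x => ENNReal.ofReal (Real.exp (-(a * ((∑ i, x i) + 1)))) with hfdef
    set E := Eset γ (m + 1) with hEdef
    have hE : MeasurableSet E := measurableSet_Eset γ (m + 1)
    set e := MeasurableEquiv.piFinSuccAbove (fun _ : Fin (m + 2) => ℝ) 0 with hedef
    have hMP := measurePreserving_piFinSuccAbove
      (fun i : Fin (m + 2) => expMeasure (l ((i : ℕ) + 1))) 0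
    have hsymm : ∀ (y : ℝ) (z : Fin (m + 1) → ℝ), (e.symm (y, z)) = Fin.cons y z := by
      intro y z
      rw [hedef]
      rw [MeasurableEquiv.piFinSuccAbove_symm_apply]
      exact Fin.insertNth_zero' y z
    rw [← lintegral_indicator hE f]
    have hcomp := hMP.lintegral_comp_emb e.measurableEmbedding
      (fun p => E.indicator f (e.symm p))
    refine ((lintegral_congr fun x => congrArg (E.indicator f) (e.symm_apply_apply x).symm).trans
      hcomp).trans ?_
    have hmeas : Measurable (fun p : ℝ × (Fin (m + 1) → ℝ) => E.indicator f (e.symm p)) :=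
      ((measurable_weight (n := m + 2) a).indicator hE).comp e.symm.measurable
    rw [lintegral_prod_symm _ hmeas.aemeasurable]
    have hinner : ∀ z : Fin (m + 1) → ℝ,
        (∫⁻ y, E.indicator f (e.symm (y, z)) ∂(expMeasure (l ((↑(0 : Fin (m + 2))) + 1))))
        = (Eset γ m).indicator (fun z => ENNReal.ofReal (l 1 / (l 1 + a)) *
            ENNReal.ofReal (Real.exp (-(a' * ((∑ i, z i) + 1))))) z := by
      intro z
      have h0 : (↑(0 : Fin (m + 2)) : ℕ) + 1 = 1 := by simp
      rw [h0]
      by_cases hz : z ∈ Eset γ m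
      · have hzn : ∀ i, 0 ≤ z i := Eset_nonneg hγ hz
        have hs1 : 0 ≤ (∑ i, z i) := Finset.sum_nonneg fun i _ => hzn i
        have ht : 0 ≤ γ * ((∑ i, z i) + 1) := mul_nonneg hγ.le (by linarith)
        have hpt : ∀ y, E.indicator f (e.symm (y, z))
            = (Set.Ici (γ * ((∑ i, z i) + 1))).indicator
                (fun y => ENNReal.ofReal (Real.exp (-(a * (y + ((∑ i, z i) + 1)))))) y := by
          intro y
          rw [hsymm y z]
          by_cases hy : γ * ((∑ i, z i) + 1) ≤ y
          · rw [hEdef, Set.indicator_of_mem ((cons_mem_Eset_iff y z).2 ⟨hz, hy⟩),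
              Set.indicator_of_mem (Set.mem_Ici.2 hy), hfdef]
            simp only [Fin.sum_cons]
            ring_nf
          · rw [hEdef, Set.indicator_of_notMem
                (fun hc => hy ((cons_mem_Eset_iff y z).1 hc).2),
              Set.indicator_of_notMem (by simpa using hy)]
        have hsplit : ∀ y : ℝ, ENNReal.ofReal (Real.exp (-(a * (y + ((∑ i, z i) + 1)))))
            = ENNReal.ofReal (Real.exp (-(a * ((∑ i, z i) + 1)))) *
              ENNReal.ofReal (Real.exp (-(a * y))) := by
          intro y
          rw [← ENNReal.ofReal_mul (Real.exp_nonneg _), ← Real.exp_add]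
          congr 2
          ring
        rw [lintegral_congr hpt, lintegral_indicator measurableSet_Ici,
          setLIntegral_congr_fun measurableSet_Ici
            (fun y _ => hsplit y),
          lintegral_const_mul' _ _ ENNReal.ofReal_ne_top,
          lintegral_exp_tail (hl 1) ha ht,
          Set.indicator_of_mem hz,
          ← ENNReal.ofReal_mul (Real.exp_nonneg _),
          ← ENNReal.ofReal_mul (by positivity)]
        congr 1
        rw [show -(a' * ((∑ i, z i) + 1))
            = -(a * ((∑ i, z i) + 1)) + -((l 1 + a) * (γ * ((∑ i, z i) + 1))) by
          rw [ha'def]; ring, Real.exp_add]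
        ring
      · have hpt : ∀ y, E.indicator f (e.symm (y, z)) = 0 := fun y => by
          rw [hsymm y z, hEdef, Set.indicator_of_notMem
            (fun hc => hz ((cons_mem_Eset_iff y z).1 hc).1)]
        rw [lintegral_congr hpt, lintegral_zero, Set.indicator_of_notMem hz]
    rw [lintegral_congr hinner]
    have hindmul : ∀ z : Fin (m + 1) → ℝ,
        (Eset γ m).indicator (fun z => ENNReal.ofReal (l 1 / (l 1 + a)) *
            ENNReal.ofReal (Real.exp (-(a' * ((∑ i, z i) + 1))))) z
        = ENNReal.ofReal (l 1 / (l 1 + a)) *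
            (Eset γ m).indicator
              (fun z => ENNReal.ofReal (Real.exp (-(a' * ((∑ i, z i) + 1))))) z := by
      intro z
      by_cases hz : z ∈ Eset γ m
      · rw [Set.indicator_of_mem hz, Set.indicator_of_mem hz]
      · rw [Set.indicator_of_notMem hz, Set.indicator_of_notMem hz, mul_zero]
    rw [lintegral_congr hindmul, lintegral_const_mul' _ _ ENNReal.ofReal_ne_top,
      lintegral_indicator (measurableSet_Eset γ m)]
    have hfam : (fun j : Fin (m + 1) => expMeasure (l ((((0 : Fin (m + 2)).succAbove j) : ℕ) + 1)))
        = fun i : Fin (m + 1) => expMeasure ((fun n => l (n + 1)) ((i : ℕ) + 1)) := by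
      funext j
      simp [Fin.zero_succAbove]
    rw [hfam]
    rw [ih (fun n => l (n + 1)) (fun k => hl (k + 1)) a' ha']
    rw [← ENNReal.ofReal_mul (by positivity)]
    congr 1


theorem Bseq' (γ : ℝ) (l : ℕ → ℝ) (k : ℕ) :
    Bseq γ l (k + 1) = (1 + γ) * Bseq γ l k + l (k + 1) := rfl

theorem Aseq' (γ : ℝ) (l : ℕ → ℝ) (k : ℕ) :
    Aseq γ l (k + 1) = l (k + 1) * Aseq γ l k / (γ * Bseq γ l k + l (k + 1)) := rfl

lemma Aseq_key {γ : ℝ} (l : ℕ → ℝ) :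
    ∀ (m k : ℕ), Aseq γ l k * gseq γ (m + 1) (γ * Bseq γ l k) (fun n => l (n + k))
      = Aseq γ l (m + k + 1) * Real.exp (-(γ * Bseq γ l (m + k + 1))) := by
  intro m
  induction m with
  | zero =>
    intro k
    simp only [gseq]
    rw [Nat.add_comm 1 k]
    have he : (l (k + 1) + γ * Bseq γ l k) * γ + γ * Bseq γ l k
        = γ * Bseq γ l (k + 1) := by
      rw [Bseq']; ring
    rw [he, Aseq']
    have hz : (0 : ℕ) + k + 1 = k + 1 := by omega
    rw [hz]
    ring
  | succ m ih =>
    intro k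
    have hunf : gseq γ (m + 1 + 1) (γ * Bseq γ l k) (fun n => l (n + k))
        = l (1 + k) / (l (1 + k) + γ * Bseq γ l k) *
          gseq γ (m + 1) ((l (1 + k) + γ * Bseq γ l k) * γ + γ * Bseq γ l k)
            (fun n => l (n + 1 + k)) := by
      simp only [gseq]
    rw [hunf, Nat.add_comm 1 k]
    have he : (l (k + 1) + γ * Bseq γ l k) * γ + γ * Bseq γ l k
        = γ * Bseq γ l (k + 1) := by
      rw [Bseq']; ring
    rw [he]
    have hfun : (fun n => l (n + 1 + k)) = fun n => l (n + (k + 1)) := by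
      funext n; congr 1; omega
    rw [hfun]
    have := ih (k + 1)
    have hidx : m + (k + 1) + 1 = m + 1 + k + 1 := by omega
    rw [hidx] at this
    calc Aseq γ l k * (l (k + 1) / (l (k + 1) + γ * Bseq γ l k) *
          gseq γ (m + 1) (γ * Bseq γ l (k + 1)) (fun n => l (n + (k + 1))))
        = Aseq γ l (k + 1) *
          gseq γ (m + 1) (γ * Bseq γ l (k + 1)) (fun n => l (n + (k + 1))) := by
          rw [Aseq']; ring
      _ = Aseq γ l (m + 1 + k + 1) * Real.exp (-(γ * Bseq γ l (m + 1 + k + 1))) := this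

end Aux

/-- the joint non-outage probability of `K` independent exponential SNRs
under successive cancellation decoding has the stated closed form. -/
theorem joint_nonoutage_prob (K : ℕ) (hK : 2 ≤ K) (l : ℕ → ℝ)
    (hl : ∀ k, 0 < l k) (γ : ℝ) (hγ : 0 < γ) :
    (Measure.pi fun i : Fin K => expMeasure (l ((i : ℕ) + 1)))
        {x | (∀ j : Fin K, (j : ℕ) + 1 ≤ K - 1 →
            x j ≥ γ * ((∑ i ∈ univ.filter (fun i => j < i), x i) + 1)) ∧
          x ⟨K - 1, by omega⟩ ≥ γ} =
      ENNReal.ofReal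
        (l K * Aseq γ l (K - 1) / (γ * Bseq γ l (K - 1) + l K) *
          Real.exp (-γ * ((1 + γ) * Bseq γ l (K - 1) + l K))) := by
  obtain ⟨m, rfl⟩ : ∃ m, K = m + 1 + 1 := ⟨K - 2, by omega⟩
  have h0 := main_lemma hγ (m + 1) l hl 0 le_rfl
  simp only [zero_mul, neg_zero, Real.exp_zero, ENNReal.ofReal_one] at h0
  rw [setLIntegral_one] at h0
  have hkey := Aseq_key (γ := γ) l (m + 1) 0
  have hA0 : Aseq γ l 0 = 1 := rfl
  have hB0 : Bseq γ l 0 = 0 := rfl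
  have hfun : (fun n => l (n + 0)) = l := funext fun n => by rw [Nat.add_zero]
  rw [hA0, hB0, one_mul, mul_zero, hfun] at hkey
  simp only [Nat.add_zero] at hkey
  have hset : {x : Fin (m + 1 + 1) → ℝ | (∀ j : Fin (m + 1 + 1),
      (j : ℕ) + 1 ≤ m + 1 + 1 - 1 →
      x j ≥ γ * ((∑ i ∈ univ.filter (fun i => j < i), x i) + 1)) ∧
      x ⟨m + 1 + 1 - 1, by omega⟩ ≥ γ} = Eset γ (m + 1) := rfl
  rw [hset, h0, hkey]
  congr 1
  simp only [Nat.add_sub_cancel]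
  rw [Aseq' γ l (m + 1)]
  have hexp : -(γ * Bseq γ l (m + 1 + 1))
      = -γ * ((1 + γ) * Bseq γ l (m + 1) + l (m + 1 + 1)) := by
    rw [Bseq']; ring
  rw [hexp]
end
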